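/- Let A = diag(0.5, 0.5) ∈ ℝ^{2×2}, B = (1,0)ᵀ ∈ ℝ^{2×1}, and K = -(0, 0.25) ∈ ℝ^{1×2}. Then there do not exist a symmetric positive definite matrix P ∈ ℝ^{2×2} and a scalar R > 0 such that (R + BᵀPB) K = -BᵀPA. Consequently K, although stabilizing, is not the optimal controller of any standard discrete-time LQR problem with Q ⪰ 0 and R > 0. -/

import Mathlib

open Matrix

/-- A real square matrix is Schur stable if all its complex eigenvalues
lie strictly inside the unit disk. -/
def SchurStable {n : ℕ} (M : Matrix (Fin n) (Fin n) ℝ) : Prop :=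
  ∀ μ ∈ spectrum ℂ (M.map (algebraMap ℝ ℂ)), ‖μ‖ < 1

theorem stmt_1 :
    let A : Matrix (Fin 2) (Fin 2) ℝ := !![(0.5 : ℝ), 0; 0, 0.5]
    let B : Matrix (Fin 2) (Fin 1) ℝ := !![(1 : ℝ); 0]
    let K : Matrix (Fin 1) (Fin 2) ℝ := !![(0 : ℝ), -0.25]
    SchurStable (A + B * K) ∧
      ¬ ∃ (P : Matrix (Fin 2) (Fin 2) ℝ) (R : ℝ),
          P.PosDef ∧ 0 < R ∧
          (R • (1 : Matrix (Fin 1) (Fin 1) ℝ) + Bᵀ * P * B) * K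
            = -(Bᵀ * P * A) := by
  intro A B K
  constructor
  · intro μ hμ
    rw [spectrum.mem_iff] at hμ
    have hdet : ((algebraMap ℂ (Matrix (Fin 2) (Fin 2) ℂ)) μ -
        (A + B * K).map (algebraMap ℝ ℂ)).det = 0 := by
      by_contra h
      exact hμ ((Matrix.isUnit_iff_isUnit_det _).mpr (isUnit_iff_ne_zero.mpr h))
    have hM : (A + B * K).map (algebraMap ℝ ℂ) = !![(0.5 : ℂ), -0.25; 0, 0.5] := by
      simp only [A, B, K]
      ext i j
      fin_cases i <;> fin_cases j <;>
        simp [Matrix.map_apply, Matrix.add_apply, Matrix.mul_apply, Fin.sum_univ_succ] <;> norm_num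
    rw [hM] at hdet
    have : (μ - 0.5) * (μ - 0.5) = 0 := by
      have hsc : (algebraMap ℂ (Matrix (Fin 2) (Fin 2) ℂ)) μ - !![(0.5 : ℂ), -0.25; 0, 0.5]
          = !![μ - 0.5, 0.25; 0, μ - 0.5] := by
        ext i j
        fin_cases i <;> fin_cases j <;>
          simp [Algebra.algebraMap_eq_smul_one, Matrix.one_apply, Matrix.sub_apply]
      rw [hsc, Matrix.det_fin_two_of] at hdet
      linear_combination hdet
    have hμ5 : μ = 0.5 := by
      rcases mul_eq_zero.mp this with h | h <;> exact sub_eq_zero.mp h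
    rw [hμ5]
    norm_num [Complex.norm_real]
  · rintro ⟨P, R, hP, hR, heq⟩
    have h00 := congrFun (congrFun heq 0) 0
    simp [Matrix.mul_apply, Matrix.add_apply, Matrix.smul_apply, Matrix.neg_apply,
      Fin.sum_univ_succ, B, K, A] at h00
    have hpos : 0 < P 0 0 := by
      have := (posDef_iff_dotProduct_mulVec.mp hP).2 (x := fun i => if i = 0 then 1 else 0) (by intro h; simpa using congrFun h 0)
      simpa [dotProduct, Fin.sum_univ_succ, Matrix.mulVec] using this
    rcases h00 with h | h
    · linarith
    · norm_num at h
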